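/- arXiv:2103.09268 — 2 statements merged into one kernel-verified Lean document; each statement's English description precedes it below -/
import Mathlib

section
/- Let r : ℝ → S_X be a natural parameterization of the unit sphere of a smooth 2-dimensional Banach space X with phase shift φ. If φ is Lipschitz at all but countably many points of ℝ, then the derivative r' = r∘φ is locally absolutely continuous (i.e., X is absolutely smooth). -/
open Metric Set Function Module

/-- `f` is Lipschitz at the point `s`: there is a constant `C` with
`|f(s+ε)-f(s)| ≤ C|ε| + o(ε)` for small `ε`. -/
def LipschitzPtAt (f : ℝ → ℝ) (s : ℝ) : Prop :=
  ∃ C : ℝ, ∀ η : ℝ, 0 < η → ∃ δ : ℝ, 0 < δ ∧ ∀ ε : ℝ, |ε| < δ →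
    |f (s + ε) - f s| ≤ C * |ε| + η * |ε|

/-- `f` is absolutely continuous on the interval `[a, b]`. -/
def AbsContOn {X : Type*} [NormedAddCommGroup X] (f : ℝ → X) (a b : ℝ) : Prop :=
  ∀ η : ℝ, 0 < η → ∃ δ : ℝ, 0 < δ ∧ ∀ n : ℕ, ∀ x y : Fin n → ℝ,
    (∀ i, a ≤ x i ∧ x i < y i ∧ y i ≤ b) →
    (∀ i j : Fin n, i < j → y i ≤ x j) →
    (∑ i, (y i - x i)) < δ → (∑ i, ‖f (y i) - f (x i)‖) < η

/-- `f` is locally absolutely continuous. -/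
def LocAbsCont {X : Type*} [NormedAddCommGroup X] (f : ℝ → X) : Prop :=
  ∀ s : ℝ, ∃ a b : ℝ, a < s ∧ s < b ∧ AbsContOn f a b

open MeasureTheory ENNReal

/-- Key measure-theoretic lemma: a continuous monotone function which is pointwise
Lipschitz off a countable set has Stieltjes measure absolutely continuous w.r.t. Lebesgue. -/
lemma stieltjes_ac (φ : ℝ → ℝ) (hφc : Continuous φ) (hφm : Monotone φ)
    (hcnt : {s : ℝ | ¬ LipschitzPtAt φ s}.Countable)
    (F : StieltjesFunction ℝ) (hF : ∀ x, F x = φ x) :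
    F.measure ≪ (volume : Measure ℝ) := by
  have hleft : ∀ x : ℝ, Function.leftLim F.toFun x = F x := by
    intro x
    apply leftLim_eq_of_tendsto
    have : Continuous F.toFun := by
      have : F.toFun = φ := funext hF
      rw [this]; exact hφc
    exact (this.tendsto x).mono_left nhdsWithin_le_nhds
  have hIcc : ∀ a b : ℝ, F.measure (Icc a b) = ENNReal.ofReal (φ b - φ a) := by
    intro a b
    rw [F.measure_Icc, hleft, hF, hF]
  have hatom : ∀ x : ℝ, F.measure {x} = 0 := by
    intro x
    rw [F.measure_singleton, hleft, sub_self, ENNReal.ofReal_zero]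
  -- the sets with uniform pointwise Lipschitz control
  set E : ℕ → Set ℝ := fun n =>
    {z | ∀ ε : ℝ, |ε| < 1 / (n + 1 : ℝ) → |φ (z + ε) - φ z| ≤ (n + 1 : ℝ) * |ε|} with hE
  have hcover : ∀ z : ℝ, LipschitzPtAt φ z → ∃ n : ℕ, z ∈ E n := by
    intro z hz
    obtain ⟨C, hC⟩ := hz
    obtain ⟨δ, hδ, hCd⟩ := hC 1 one_pos
    obtain ⟨n, hn⟩ := exists_nat_ge (max C (1 / δ))
    refine ⟨n, fun ε hε => ?_⟩
    have hn1 : (1 : ℝ) / δ ≤ (n : ℝ) + 1 := le_trans (le_max_right _ _) (by linarith)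
    have hδn : 1 / ((n : ℝ) + 1) ≤ δ := by
      rw [div_le_iff₀ (by positivity)]
      rw [div_le_iff₀ hδ] at hn1
      linarith
    have h1 := hCd ε (lt_of_lt_of_le hε hδn)
    have hCn : C ≤ (n : ℝ) := le_trans (le_max_left _ _) hn
    have : C * |ε| + 1 * |ε| ≤ ((n : ℝ) + 1) * |ε| := by
      have := abs_nonneg ε
      nlinarith
    linarith
  -- key: F.measure vanishes on null subsets of E n
  have key : ∀ (n : ℕ) (t : Set ℝ), t ⊆ E n → volume t = 0 → F.measure t = 0 := by
    intro n t htE ht0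
    set L : ℝ := (n : ℝ) + 1 with hL
    have hLpos : 0 < L := by positivity
    have main : ∀ ε' : ℝ, 0 < ε' → F.measure t ≤ ENNReal.ofReal (4 * L) * ENNReal.ofReal ε' := by
      intro ε' hε'
      obtain ⟨U, htU, hUopen, hUlt⟩ :=
        Set.exists_isOpen_lt_of_lt t (ENNReal.ofReal ε') (by rw [ht0]; positivity)
      -- choose radii
      have hrch : ∀ z ∈ t, ∃ ρ : ℝ, 0 < ρ ∧ ρ < 1 / (8 * L) ∧ closedBall z ρ ⊆ U := by
        intro z hz
        obtain ⟨ρ₀, hρ₀, hball⟩ := Metric.isOpen_iff.1 hUopen z (htU hz)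
        refine ⟨min (ρ₀ / 2) (1 / (16 * L)), by positivity, ?_, ?_⟩
        · calc min (ρ₀ / 2) (1 / (16 * L)) ≤ 1 / (16 * L) := min_le_right _ _
            _ < 1 / (8 * L) := by
              apply div_lt_div_of_pos_left one_pos (by positivity) (by linarith)
        · refine subset_trans ?_ hball
          intro w hw
          have : dist w z ≤ min (ρ₀ / 2) (1 / (16 * L)) := hw
          have : dist w z < ρ₀ := lt_of_le_of_lt (this.trans (min_le_left _ _)) (by linarith)
          exact this
      choose! ρ hρ0 hρlt hρsub using hrch
      obtain ⟨u, hut, hdisj, hcov⟩ :=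
        Vitali.exists_disjoint_subfamily_covering_enlargement_closedBall t id ρ (1 / (8 * L))
          (fun a ha => (hρlt a ha).le) 4 (by norm_num)
      simp only [id] at hdisj hcov
      have hucnt : u.Countable := by
        apply hdisj.countable_of_nonempty_interior
        intro z hz
        have h0 : 0 < ρ z := hρ0 z (hut hz)
        exact Nonempty.mono (interior_maximal ball_subset_closedBall isOpen_ball)
          (nonempty_ball.2 h0)
      -- t is covered by the enlarged balls
      have htsub : t ⊆ ⋃ b ∈ u, closedBall b (4 * ρ b) := by
        intro z hz
        obtain ⟨b, hb, hsub⟩ := hcov z hz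
        exact mem_biUnion hb (hsub (mem_closedBall_self (hρ0 z hz).le))
      have hball_bound : ∀ b ∈ u, F.measure (closedBall b (4 * ρ b)) ≤
          ENNReal.ofReal (4 * L) * volume (closedBall b (ρ b)) := by
        intro b hb
        have hbt : b ∈ t := hut hb
        have hbE : b ∈ E n := htE hbt
        set R : ℝ := 4 * ρ b with hR
        have hRpos : 0 < R := by have := hρ0 b hbt; positivity
        have hRlt : R < 1 / L := by
          have := hρlt b hbt
          rw [hR]
          have : 4 * ρ b < 4 * (1 / (8 * L)) := by linarith
          calc 4 * ρ b < 4 * (1 / (8 * L)) := this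
            _ = 1 / (2 * L) := by field_simp; ring
            _ < 1 / L := by
              apply div_lt_div_of_pos_left one_pos hLpos (by linarith)
        have h1 : φ (b + R) - φ b ≤ L * R := by
          have := hbE R (by rwa [abs_of_pos hRpos])
          have h2 := abs_le.1 this
          calc φ (b + R) - φ b ≤ |φ (b + R) - φ b| := le_abs_self _
            _ ≤ L * |R| := by simpa [hL] using this
            _ = L * R := by rw [abs_of_pos hRpos]
        have h2 : φ b - φ (b - R) ≤ L * R := by
          have := hbE (-R) (by rwa [abs_neg, abs_of_pos hRpos])
          have h3 : |φ (b + -R) - φ b| ≤ L * R := by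
            simpa [hL, abs_of_pos hRpos] using this
          have := (abs_le.1 h3).1
          have hb' : b + -R = b - R := by ring
          rw [hb'] at this
          linarith
        calc F.measure (closedBall b R) = F.measure (Icc (b - R) (b + R)) := by
              rw [Real.closedBall_eq_Icc]
          _ = ENNReal.ofReal (φ (b + R) - φ (b - R)) := hIcc _ _
          _ ≤ ENNReal.ofReal (2 * L * R) := by
              apply ENNReal.ofReal_le_ofReal; linarith
          _ = ENNReal.ofReal (4 * L) * ENNReal.ofReal (2 * ρ b) := by
              rw [← ENNReal.ofReal_mul (by positivity)]
              congr 1; rw [hR]; ring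
          _ = ENNReal.ofReal (4 * L) * volume (closedBall b (ρ b)) := by
              rw [Real.volume_closedBall]
      calc F.measure t ≤ F.measure (⋃ b ∈ u, closedBall b (4 * ρ b)) := measure_mono htsub
        _ ≤ ∑' b : u, F.measure (closedBall b (4 * ρ b)) := measure_biUnion_le _ hucnt _
        _ ≤ ∑' b : u, ENNReal.ofReal (4 * L) * volume (closedBall (b : ℝ) (ρ b)) :=
            ENNReal.tsum_le_tsum (fun b => hball_bound b b.2)
        _ = ENNReal.ofReal (4 * L) * ∑' b : u, volume (closedBall (b : ℝ) (ρ b)) :=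
            ENNReal.tsum_mul_left
        _ = ENNReal.ofReal (4 * L) * volume (⋃ b ∈ u, closedBall b (ρ b)) := by
            rw [measure_biUnion hucnt hdisj (fun b _ => measurableSet_closedBall)]
        _ ≤ ENNReal.ofReal (4 * L) * volume U := by
            apply mul_le_mul_right
            apply measure_mono
            exact iUnion₂_subset fun b hb => hρsub b (hut hb)
        _ ≤ ENNReal.ofReal (4 * L) * ENNReal.ofReal ε' := mul_le_mul_right hUlt.le _
    -- conclude
    refine le_antisymm ?_ zero_le
    refine ENNReal.le_of_forall_pos_le_add (fun ε hε _ => ?_)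
    rw [zero_add]
    have h4L : (0:ℝ) < 4 * L := by positivity
    calc F.measure t ≤ ENNReal.ofReal (4 * L) * ENNReal.ofReal ((ε : ℝ) / (4 * L)) :=
          main _ (by positivity)
      _ = ENNReal.ofReal (4 * L * ((ε : ℝ) / (4 * L))) := by
          rw [← ENNReal.ofReal_mul (by positivity)]
      _ = ENNReal.ofReal (ε : ℝ) := by congr 1; field_simp
      _ = (ε : ℝ≥0∞) := ENNReal.ofReal_coe_nnreal
  -- now the absolute continuity
  refine Measure.AbsolutelyContinuous.mk (fun s _ hs0 => ?_)
  have hsplit : s ⊆ {z : ℝ | ¬ LipschitzPtAt φ z} ∪ ⋃ n, (s ∩ E n) := by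
    intro z hz
    by_cases h : LipschitzPtAt φ z
    · obtain ⟨n, hn⟩ := hcover z h
      exact Or.inr (mem_iUnion.2 ⟨n, hz, hn⟩)
    · exact Or.inl h
  have h1 : F.measure {z : ℝ | ¬ LipschitzPtAt φ z} = 0 := by
    haveI : NullSingletonClass F.measure := ⟨hatom⟩
    exact hcnt.measure_zero _
  have h2 : ∀ n, F.measure (s ∩ E n) = 0 := fun n =>
    key n _ (inter_subset_right) (measure_mono_null inter_subset_left hs0)
  refine le_antisymm ?_ zero_le
  calc F.measure s ≤ F.measure ({z : ℝ | ¬ LipschitzPtAt φ z} ∪ ⋃ n, (s ∩ E n)) :=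
        measure_mono hsplit
    _ ≤ F.measure {z : ℝ | ¬ LipschitzPtAt φ z} + F.measure (⋃ n, (s ∩ E n)) :=
        measure_union_le _ _
    _ ≤ 0 + ∑' n, F.measure (s ∩ E n) := by
        rw [h1]; exact add_le_add_right (measure_iUnion_le _) _
    _ = 0 := by simp [h2]

/-- `φ` is the phase shift of the natural parameterization `r`. -/
def IsPhaseShift {X : Type*} [NormedAddCommGroup X] [NormedSpace ℝ X]
    (r : ℝ → X) (φ : ℝ → ℝ) : Prop :=
  ∀ s : ℝ, s < φ s ∧ deriv r s = r (φ s) ∧ ∀ t : ℝ, s < t → deriv r s = r t → φ s ≤ t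

theorem absolutely_smooth_of_phase_shift_lipschitz_cocountable
    (X : Type*) [NormedAddCommGroup X] [NormedSpace ℝ X]
    (hdim : finrank ℝ X = 2)
    (hsmooth : ∀ x : X, x ≠ 0 → DifferentiableAt ℝ (fun y : X => ‖y‖) x)
    (r : ℝ → X) (hr : ContDiff ℝ 1 r)
    (hr1 : ∀ s, ‖r s‖ = 1) (hdr : ∀ s, ‖deriv r s‖ = 1)
    (φ : ℝ → ℝ) (hφ : IsPhaseShift r φ)
    (hφc : Continuous φ) (hφm : Monotone φ)
    (hcnt : {s : ℝ | ¬ LipschitzPtAt φ s}.Countable) :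
    LocAbsCont (deriv r) := by
  classical
  set F : StieltjesFunction ℝ := ⟨φ, hφm, fun x => hφc.continuousAt.continuousWithinAt⟩ with hFdef
  have hF : ∀ x, F x = φ x := fun _ => rfl
  have habs : F.measure ≪ (volume : Measure ℝ) := stieltjes_ac φ hφc hφm hcnt F hF
  have hderiv : ∀ t, deriv r t = r (φ t) := fun t => (hφ t).2.1
  have hlip : LipschitzWith 1 r := by
    apply lipschitzWith_of_nnnorm_deriv_le (hr.differentiable one_ne_zero)
    intro x
    rw [← NNReal.coe_le_coe, coe_nnnorm, hdr x, NNReal.coe_one]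
  intro s
  set a : ℝ := s - 1
  set b : ℝ := s + 1
  refine ⟨a, b, by simp [a], by simp [b], ?_⟩
  intro η hη
  set μ' : Measure ℝ := F.measure.restrict (Icc a b) with hμ'
  haveI : IsFiniteMeasure μ' := by
    constructor
    rw [hμ', Measure.restrict_apply_univ, F.measure_Icc]
    exact ENNReal.ofReal_lt_top
  have hac' : μ' ≪ (volume : Measure ℝ) :=
    ((habs.restrict (Icc a b)).trans (Measure.absolutelyContinuous_of_le Measure.restrict_le_self))
  have h1 : ∫⁻ z, μ'.rnDeriv volume z ∂volume ≠ ⊤ :=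
    (Measure.lintegral_rnDeriv_lt_top μ' volume).ne
  obtain ⟨δ, hδpos, hδ⟩ :=
    exists_pos_setLIntegral_lt_of_measure_lt h1 (ε := ENNReal.ofReal η)
      (ENNReal.ofReal_pos.2 hη).ne'
  obtain ⟨c, hc0, hcδ⟩ := exists_between hδpos
  have hcne : c ≠ ⊤ := hcδ.ne_top
  refine ⟨c.toReal, ENNReal.toReal_pos hc0.ne' hcne, ?_⟩
  intro n x y hxy hord hsum
  set U : Set ℝ := ⋃ i, Ioc (x i) (y i) with hU
  have hUm : MeasurableSet U := MeasurableSet.iUnion (fun i => measurableSet_Ioc)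
  have hsub : ∀ i, Ioc (x i) (y i) ⊆ Icc a b := fun i z hz =>
    ⟨le_trans (hxy i).1 hz.1.le, le_trans hz.2 (hxy i).2.2⟩
  have hdisj : Pairwise (Disjoint on fun i => Ioc (x i) (y i)) := by
    intro i j hij
    rcases lt_or_gt_of_ne hij with h | h
    · exact Set.Ioc_disjoint_Ioc.2 (le_trans (min_le_left _ _)
        (le_trans (hord i j h) (le_max_right _ _)))
    · exact Set.Ioc_disjoint_Ioc.2 (le_trans (min_le_right _ _)
        (le_trans (hord j i h) (le_max_left _ _)))
  have hvolU : volume U < δ := by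
    calc volume U ≤ ∑ i, volume (Ioc (x i) (y i)) := measure_iUnion_fintype_le _ _
      _ = ∑ i, ENNReal.ofReal (y i - x i) := by simp [Real.volume_Ioc]
      _ = ENNReal.ofReal (∑ i, (y i - x i)) :=
          (ENNReal.ofReal_sum_of_nonneg (fun i _ => by have := (hxy i).2.1; linarith)).symm
      _ < ENNReal.ofReal c.toReal := (ENNReal.ofReal_lt_ofReal_iff
          (ENNReal.toReal_pos hc0.ne' hcne)).2 hsum
      _ = c := ENNReal.ofReal_toReal hcne
      _ < δ := hcδ
  have hμ'U : μ' U < ENNReal.ofReal η := by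
    rw [← Measure.setLIntegral_rnDeriv' hac' hUm]
    exact hδ U hvolU
  have hμ'Ioc : ∀ i, μ' (Ioc (x i) (y i)) = ENNReal.ofReal (φ (y i) - φ (x i)) := by
    intro i
    rw [hμ', Measure.restrict_apply measurableSet_Ioc,
      inter_eq_self_of_subset_left (hsub i), F.measure_Ioc]
  have hμ'Usum : μ' U = ∑ i, ENNReal.ofReal (φ (y i) - φ (x i)) := by
    rw [hU, measure_iUnion hdisj (fun i => measurableSet_Ioc)]
    rw [tsum_fintype]
    exact Finset.sum_congr rfl (fun i _ => hμ'Ioc i)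
  have hsum_eq : ∑ i, (φ (y i) - φ (x i)) = (μ' U).toReal := by
    rw [hμ'Usum, ENNReal.toReal_sum (fun i _ => ENNReal.ofReal_ne_top)]
    exact Finset.sum_congr rfl (fun i _ => (ENNReal.toReal_ofReal
      (by have := hφm (hxy i).2.1.le; linarith)).symm)
  calc ∑ i, ‖deriv r (y i) - deriv r (x i)‖ ≤ ∑ i, (φ (y i) - φ (x i)) := by
        apply Finset.sum_le_sum
        intro i _
        rw [hderiv, hderiv]
        have := hlip.dist_le_mul (φ (y i)) (φ (x i))
        rw [NNReal.coe_one, one_mul, Real.dist_eq, abs_of_nonneg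
          (by have := hφm (hxy i).2.1.le; linarith)] at this
        calc ‖r (φ (y i)) - r (φ (x i))‖ = dist (r (φ (y i))) (r (φ (x i))) :=
              (dist_eq_norm _ _).symm
          _ ≤ φ (y i) - φ (x i) := this
    _ = (μ' U).toReal := hsum_eq
    _ < η := by
        rw [← ENNReal.lt_ofReal_iff_toReal_lt (ne_top_of_lt hμ'U)]
        exact hμ'U
end

section
/- Let X be a strictly convex smooth 2-dimensional Banach space that is not absolutely smooth, with natural parameterization r and phase shift φ. Then the set C of points s ∈ ℝ at which φ is not Lipschitz is uncountable, and consequently there exist a, b ∈ C such that the vectors r(a) and r(b) are linearly independent. -/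
open Metric Set Function Module

open Filter Topology MeasureTheory ENNReal in
/-- A level set of a function whose derivative has norm one everywhere is countable. -/
lemma countable_levelset {X : Type*} [NormedAddCommGroup X] [NormedSpace ℝ X]
    {r : ℝ → X} (hr : Differentiable ℝ r) (hdr : ∀ t, ‖deriv r t‖ = 1) (v : X) :
    {s : ℝ | r s = v}.Countable := by
  set A := {s : ℝ | r s = v} with hA
  have isol : ∀ s ∈ A, ∃ ε > (0:ℝ), ∀ t ∈ A, t ≠ s → ε ≤ |t - s| := by
    intro s hs
    by_contra h
    push_neg at h
    have hne : (𝓝[A \ {s}] s).NeBot := by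
      rw [← mem_closure_iff_nhdsWithin_neBot, Metric.mem_closure_iff]
      intro ε hε
      obtain ⟨t, ht, hts, hlt⟩ := h ε hε
      exact ⟨t, ⟨ht, hts⟩, by rwa [Real.dist_eq, abs_sub_comm]⟩
    have hd : HasDerivAt r (deriv r s) s := (hr s).hasDerivAt
    have h1 : Tendsto (slope r s) (𝓝[A \ {s}] s) (𝓝 (deriv r s)) :=
      (hasDerivAt_iff_tendsto_slope.1 hd).mono_left
        (nhdsWithin_mono _ (fun t ht => ht.2))
    have h2 : Tendsto (slope r s) (𝓝[A \ {s}] s) (𝓝 0) := by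
      apply Tendsto.congr' _ tendsto_const_nhds
      filter_upwards [eventually_mem_nhdsWithin] with t ht
      have h3 : r t = r s := by
        have h4 : r t = v := ht.1
        have h5 : r s = v := hs
        rw [h4, h5]
      simp [slope_def_module, h3]
    have h6 : deriv r s = 0 := tendsto_nhds_unique h1 h2
    have := hdr s
    rw [h6, norm_zero] at this
    exact zero_ne_one this
  choose! ε hε0 hεsep using isol
  have key : ∀ s ∈ A, ∃ q : ℚ, |(q:ℝ) - s| < ε s / 3 := by
    intro s hs
    obtain ⟨q, hq1, hq2⟩ := exists_rat_btwn (by linarith [hε0 s hs] : s < s + ε s / 3)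
    exact ⟨q, by rw [abs_sub_lt_iff]; constructor <;> linarith⟩
  choose! g hg using key
  have inj : InjOn g A := by
    intro s hs t ht hst
    by_contra hne
    have h1 : ε s ≤ |t - s| := hεsep s hs t ht (fun h => hne h.symm)
    have h2 : ε t ≤ |t - s| := by
      rw [abs_sub_comm]; exact hεsep t ht s hs hne
    have h3 := hg s hs
    have h4 := hg t ht
    rw [hst] at h3
    have h5 : |t - s| ≤ |(g t : ℝ) - t| + |(g t : ℝ) - s| := by
      have : t - s = -(((g t : ℝ) - t)) + ((g t : ℝ) - s) := by ring
      rw [this]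
      exact (abs_add_le _ _).trans (by rw [abs_neg])
    have h6 : ε t / 3 + ε s / 3 ≤ 2 / 3 * |t - s| := by
      rcases le_total (ε s) (ε t) with hc | hc <;> nlinarith
    nlinarith [abs_nonneg (t - s), hε0 s hs, hε0 t ht]
  exact countable_of_injective_of_countable_image inj (Set.to_countable _)

/-- The Stieltjes function associated to a monotone continuous function. -/
noncomputable def phiStj (φ : ℝ → ℝ) (hφm : Monotone φ) (hφc : Continuous φ) :
    StieltjesFunction ℝ :=
  ⟨φ, hφm, fun x => (hφc.continuousAt).continuousWithinAt⟩

open Filter Topology MeasureTheory ENNReal in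
/-- If a monotone continuous function is pointwise Lipschitz outside a countable set, then its
Stieltjes measure is absolutely continuous with respect to Lebesgue measure. -/
lemma phiStj_null {φ : ℝ → ℝ} (hφm : Monotone φ) (hφc : Continuous φ)
    (hC : {s : ℝ | ¬ LipschitzPtAt φ s}.Countable) :
    ∀ E : Set ℝ, volume E = 0 → (phiStj φ hφm hφc).measure E = 0 := by
  set f := phiStj φ hφm hφc with hf
  set μ := f.measure with hμ
  haveI : NullSingletonClass μ := by
    constructor
    intro x
    have h1 : leftLim φ x = φ x := by
      have hnb : (𝓝[<] x).NeBot := inferInstance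
      exact leftLim_eq_of_tendsto ((hφc.tendsto x).mono_left nhdsWithin_le_nhds)
    have := f.measure_singleton x
    rw [this]
    show ENNReal.ofReal (φ x - leftLim φ x) = 0
    rw [h1, sub_self, ENNReal.ofReal_zero]
  set G : ℕ → Set ℝ := fun m =>
    {s : ℝ | ∀ ε : ℝ, |ε| < ((m:ℝ)+1)⁻¹ → |φ (s+ε) - φ s| ≤ ((m:ℝ)+1) * |ε|} with hG
  have hGcov : ∀ s : ℝ, LipschitzPtAt φ s → ∃ m, s ∈ G m := by
    intro s hs
    obtain ⟨C, hCs⟩ := hs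
    obtain ⟨δ, hδ0, hδ⟩ := hCs 1 one_pos
    obtain ⟨m, hm⟩ := exists_nat_ge (max C δ⁻¹)
    refine ⟨m, fun ε hε => ?_⟩
    have hmC : C ≤ (m:ℝ) := (le_max_left _ _).trans hm
    have hmδ : δ⁻¹ ≤ (m:ℝ) := (le_max_right _ _).trans hm
    have hm1 : ((m:ℝ)+1)⁻¹ < δ := by
      rw [inv_lt_comm₀ (by positivity) hδ0]
      linarith
    have h2 := hδ ε (hε.trans hm1)
    calc |φ (s+ε) - φ s| ≤ C * |ε| + 1 * |ε| := h2
      _ ≤ ((m:ℝ)+1) * |ε| := by nlinarith [abs_nonneg ε]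
  have key : ∀ (m : ℕ) (A : Set ℝ), A ⊆ G m →
      μ A ≤ (ENNReal.ofReal (4*((m:ℝ)+1))) * volume A := by
    intro m A hA
    have hvf : IsLocallyFiniteMeasure ((ENNReal.ofReal (4*((m:ℝ)+1))) • (volume : Measure ℝ)) := by
      constructor
      intro x
      refine ⟨Ioo (x-1) (x+1), Ioo_mem_nhds (by linarith) (by linarith), ?_⟩
      simp only [Measure.smul_apply, smul_eq_mul, Real.volume_Ioo]
      exact ENNReal.mul_lt_top ENNReal.ofReal_lt_top ENNReal.ofReal_lt_top
    have := (Besicovitch.vitaliFamily μ).measure_le_of_frequently_le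
      ((ENNReal.ofReal (4*((m:ℝ)+1))) • (volume : Measure ℝ))
      Measure.AbsolutelyContinuous.rfl A ?_
    · simpa using this
    intro x hx
    have hev : ∀ᶠ r in 𝓝[>] (0:ℝ),
        μ (closedBall x r) ≤ ((ENNReal.ofReal (4*((m:ℝ)+1))) • (volume : Measure ℝ)) (closedBall x r) := by
      have hmem : Ioo (0:ℝ) (((m:ℝ)+1)⁻¹/2) ∈ 𝓝[>] (0:ℝ) :=
        Ioo_mem_nhdsGT_of_mem ⟨le_refl _, by positivity⟩
      filter_upwards [hmem] with r hr
      obtain ⟨hr0, hrw⟩ := hr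
      have hGx := hA hx
      have hb1 : |φ (x + r) - φ x| ≤ ((m:ℝ)+1) * r := by
        have := hGx r (by rw [abs_of_pos hr0]; linarith [inv_pos.mpr (by positivity : (0:ℝ) < (m:ℝ)+1)])
        rwa [abs_of_pos hr0] at this
      have hm0 : (0:ℝ) ≤ ((m:ℝ)+1) := by positivity
      have hb2 : |φ (x + (-(2*r))) - φ x| ≤ ((m:ℝ)+1) * (2*r) := by
        have hε2 : |(-(2*r))| = 2*r := by
          rw [abs_neg]; exact abs_of_pos (by linarith)
        have := hGx (-(2*r)) (by rw [hε2]; linarith)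
        rwa [hε2] at this
      have hsub : closedBall x r ⊆ Ioc (x - 2*r) (x + r) := by
        rw [Real.closedBall_eq_Icc]
        intro y hy
        exact ⟨by linarith [hy.1], hy.2⟩
      have hμb : μ (closedBall x r) ≤ ENNReal.ofReal (φ (x+r) - φ (x - 2*r)) := by
        refine (measure_mono hsub).trans ?_
        rw [hμ, f.measure_Ioc]
        exact le_rfl
      have harith : φ (x+r) - φ (x - 2*r) ≤ 4*((m:ℝ)+1) * r := by
        have e1 : φ (x+r) - φ x ≤ ((m:ℝ)+1)*r := (le_abs_self _).trans hb1
        have e2 : φ x - φ (x - 2*r) ≤ ((m:ℝ)+1)*(2*r) := by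
          have : x + (-(2*r)) = x - 2*r := by ring
          rw [this] at hb2
          have := (neg_le_abs _).trans hb2
          linarith
        nlinarith [mul_nonneg hm0 hr0.le]
      refine hμb.trans ?_
      simp only [Measure.smul_apply, smul_eq_mul, Real.volume_closedBall]
      rw [← ENNReal.ofReal_mul (by positivity)]
      apply ENNReal.ofReal_le_ofReal
      nlinarith [mul_nonneg hm0 hr0.le]
    exact (Besicovitch.tendsto_filterAt μ x).frequently hev.frequently
  intro E hE
  have hcover : E ⊆ (E ∩ {s | ¬ LipschitzPtAt φ s}) ∪ ⋃ m, (E ∩ G m) := by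
    intro x hx
    by_cases h : LipschitzPtAt φ x
    · obtain ⟨m, hm⟩ := hGcov x h
      exact Or.inr (mem_iUnion.mpr ⟨m, hx, hm⟩)
    · exact Or.inl ⟨hx, h⟩
  refine le_antisymm ?_ zero_le
  refine (measure_mono hcover).trans ?_
  refine (measure_union_le _ _).trans ?_
  have h1 : μ (E ∩ {s | ¬ LipschitzPtAt φ s}) = 0 :=
    Set.Countable.measure_zero (hC.mono inter_subset_right) μ
  have h2 : μ (⋃ m, (E ∩ G m)) = 0 := by
    refine le_antisymm ((measure_iUnion_le _).trans ?_) zero_le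
    have : ∀ m : ℕ, μ (E ∩ G m) = 0 := by
      intro m
      refine le_antisymm ((key m _ inter_subset_right).trans ?_) zero_le
      have : volume (E ∩ G m) = 0 :=
        le_antisymm ((measure_mono inter_subset_left).trans hE.le) zero_le
      rw [this, mul_zero]
    simp [this]
  rw [h1, h2, add_zero]

open Filter Topology MeasureTheory ENNReal in
/-- If the Stieltjes measure of a monotone continuous function is absolutely continuous with
respect to Lebesgue measure, then the function is absolutely continuous on every interval. -/
lemma absContOn_phi {φ : ℝ → ℝ} (hφm : Monotone φ) (hφc : Continuous φ)
    (hnull : ∀ E : Set ℝ, volume E = 0 → (phiStj φ hφm hφc).measure E = 0)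
    (a b : ℝ) : AbsContOn φ a b := by
  set f := phiStj φ hφm hφc with hfdef
  set μ := f.measure with hμ
  intro η hη
  by_contra hcon
  push_neg at hcon
  have hstep : ∀ k : ℕ, ∃ (n : ℕ) (x y : Fin n → ℝ),
      (∀ i, a ≤ x i ∧ x i < y i ∧ y i ≤ b) ∧
      (∀ i j : Fin n, i < j → y i ≤ x j) ∧
      (∑ i, (y i - x i)) < (1/2:ℝ)^k ∧ η ≤ (∑ i, ‖φ (y i) - φ (x i)‖) := by
    intro k
    obtain ⟨n, x, y, h1, h2, h3, h4⟩ := hcon ((1/2:ℝ)^k) (by positivity)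
    exact ⟨n, x, y, h1, h2, h3, h4⟩
  choose n x y h1 h2 h3 h4 using hstep
  set s : ℕ → Set ℝ := fun k => ⋃ i : Fin (n k), Ioc (x k i) (y k i) with hs
  have hmeas : ∀ k, MeasurableSet (s k) := fun k =>
    MeasurableSet.iUnion fun i => measurableSet_Ioc
  have hsub : ∀ k, s k ⊆ Ioc a b := by
    intro k z hz
    obtain ⟨i, hi⟩ := mem_iUnion.1 hz
    exact Ioc_subset_Ioc (h1 k i).1 (h1 k i).2.2 hi
  have hvol : ∀ k, volume (s k) ≤ ENNReal.ofReal ((1/2:ℝ)^k) := by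
    intro k
    refine (measure_iUnion_fintype_le _ _).trans ?_
    have : ∀ i : Fin (n k), volume (Ioc (x k i) (y k i)) = ENNReal.ofReal (y k i - x k i) :=
      fun i => Real.volume_Ioc
    rw [Finset.sum_congr rfl (fun i _ => this i),
      ← ENNReal.ofReal_sum_of_nonneg (fun i _ => by linarith [(h1 k i).2.1])]
    exact ENNReal.ofReal_le_ofReal (h3 k).le
  have hlow : ∀ k, ENNReal.ofReal η ≤ μ (s k) := by
    intro k
    have hdisj : Pairwise (Disjoint on fun i : Fin (n k) => Ioc (x k i) (y k i)) := by
      intro i j hij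
      rcases lt_or_gt_of_ne hij with h | h
      · exact Set.Ioc_disjoint_Ioc.2 (le_trans (min_le_left _ _)
          ((h2 k i j h).trans (le_max_right _ _)))
      · exact Set.Ioc_disjoint_Ioc.2 (le_trans (min_le_right _ _)
          ((h2 k j i h).trans (le_max_left _ _)))
    have := measure_iUnion (μ := μ) hdisj (fun i => measurableSet_Ioc)
    rw [hs]
    simp only []
    rw [this, tsum_fintype]
    have heq : ∀ i : Fin (n k), μ (Ioc (x k i) (y k i)) = ENNReal.ofReal (φ (y k i) - φ (x k i)) :=
      fun i => f.measure_Ioc _ _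
    rw [Finset.sum_congr rfl (fun i _ => heq i),
      ← ENNReal.ofReal_sum_of_nonneg (fun i _ => by
        have := hφm (h1 k i).2.1.le; linarith)]
    apply ENNReal.ofReal_le_ofReal
    refine le_trans (h4 k) (le_of_eq ?_)
    refine Finset.sum_congr rfl (fun i _ => ?_)
    rw [Real.norm_eq_abs, abs_of_nonneg (by have := hφm (h1 k i).2.1.le; linarith)]
  set S : ℕ → Set ℝ := fun k => ⋃ j, ⋃ (_ : k ≤ j), s j with hS
  have hSmeas : ∀ k, MeasurableSet (S k) :=
    fun k => MeasurableSet.iUnion fun j => MeasurableSet.iUnion fun _ => hmeas j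
  have hSanti : Antitone S := by
    intro k l hkl z hz
    simp only [hS, mem_iUnion] at hz ⊢
    obtain ⟨j, hj, hzj⟩ := hz
    exact ⟨j, hkl.trans hj, hzj⟩
  have hSfin : μ (S 0) ≠ ⊤ := by
    have : S 0 ⊆ Ioc a b := by
      intro z hz
      simp only [hS, mem_iUnion] at hz
      obtain ⟨j, _, hzj⟩ := hz
      exact hsub j hzj
    refine ne_top_of_le_ne_top ?_ (measure_mono this)
    rw [hμ, f.measure_Ioc]
    exact ENNReal.ofReal_ne_top
  have htend : Tendsto (μ ∘ S) atTop (𝓝 (μ (⋂ k, S k))) :=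
    tendsto_measure_iInter_atTop (fun k => (hSmeas k).nullMeasurableSet) hSanti ⟨0, hSfin⟩
  have hlow2 : ENNReal.ofReal η ≤ μ (⋂ k, S k) := by
    refine ge_of_tendsto htend (Eventually.of_forall fun k => ?_)
    refine le_trans (hlow k) (measure_mono ?_)
    intro z hz
    simp only [hS, mem_iUnion]
    exact ⟨k, le_refl k, hz⟩
  have hT : (⋂ k, S k) = limsup s atTop := by
    rw [limsup_eq_iInf_iSup_of_nat]
    simp only [hS]
    rfl
  have hvol0 : volume (⋂ k, S k) = 0 := by
    rw [hT]
    apply measure_limsup_atTop_eq_zero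
    have hle : ∑' k, volume (s k) ≤ ∑' k, ENNReal.ofReal ((1/2:ℝ)^k) :=
      ENNReal.tsum_le_tsum hvol
    have hgeo : ∑' k, ENNReal.ofReal ((1/2:ℝ)^k) ≠ ⊤ := by
      rw [← ENNReal.ofReal_tsum_of_nonneg (fun k => by positivity)
        (summable_geometric_of_lt_one (by norm_num) (by norm_num))]
      exact ENNReal.ofReal_ne_top
    exact ne_top_of_le_ne_top hgeo hle
  have := hnull _ hvol0
  rw [this] at hlow2
  exact absurd (le_antisymm hlow2 zero_le) (ne_of_gt (ENNReal.ofReal_pos.2 hη))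

theorem not_absolutely_smooth_two_special_directions
    (X : Type*) [NormedAddCommGroup X] [NormedSpace ℝ X] [StrictConvexSpace ℝ X]
    (hdim : finrank ℝ X = 2)
    (hsmooth : ∀ x : X, x ≠ 0 → DifferentiableAt ℝ (fun y : X => ‖y‖) x)
    (r : ℝ → X) (hr : ContDiff ℝ 1 r)
    (hr1 : ∀ t, ‖r t‖ = 1) (hdr : ∀ t, ‖deriv r t‖ = 1)
    (φ : ℝ → ℝ) (hφ : IsPhaseShift r φ)
    (hφc : Continuous φ) (hφm : Monotone φ)
    (hnas : ¬ LocAbsCont (deriv r)) :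
    ¬ ({s : ℝ | ¬ LipschitzPtAt φ s}.Countable) ∧
    ∃ a b : ℝ, ¬ LipschitzPtAt φ a ∧ ¬ LipschitzPtAt φ b ∧
      LinearIndependent ℝ ![r a, r b] := by
  classical
  have hrd : Differentiable ℝ r := hr.differentiable one_ne_zero
  have hlip : ∀ u v : ℝ, u ≤ v → ‖r v - r u‖ ≤ v - u := by
    intro u v huv
    have := norm_image_sub_le_of_norm_deriv_le_segment' (f := r) (f' := deriv r) (a := u) (b := v)
      (fun z _ => ((hrd z).hasDerivAt).hasDerivWithinAt)
      (fun z _ => le_of_eq (hdr z)) v (right_mem_Icc.2 huv)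
    simpa using this
  have part1 : ¬ ({s : ℝ | ¬ LipschitzPtAt φ s}.Countable) := by
    intro hC
    apply hnas
    intro s
    refine ⟨s - 1, s + 1, by linarith, by linarith, ?_⟩
    intro η hη
    obtain ⟨δ, hδ0, hδ⟩ := absContOn_phi hφm hφc (phiStj_null hφm hφc hC) (s-1) (s+1) η hη
    refine ⟨δ, hδ0, ?_⟩
    intro n x y h1 h2 h3
    refine lt_of_le_of_lt ?_ (hδ n x y h1 h2 h3)
    apply Finset.sum_le_sum
    intro i _
    have hxy : φ (x i) ≤ φ (y i) := hφm (h1 i).2.1.le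
    calc ‖deriv r (y i) - deriv r (x i)‖
        = ‖r (φ (y i)) - r (φ (x i))‖ := by rw [(hφ (y i)).2.1, (hφ (x i)).2.1]
      _ ≤ φ (y i) - φ (x i) := hlip _ _ hxy
      _ = ‖φ (y i) - φ (x i)‖ := by
          rw [Real.norm_eq_abs, abs_of_nonneg (by linarith)]
  refine ⟨part1, ?_⟩
  have hne : {s : ℝ | ¬ LipschitzPtAt φ s}.Nonempty := by
    rcases Set.eq_empty_or_nonempty {s : ℝ | ¬ LipschitzPtAt φ s} with h | h
    · exact absurd (h ▸ Set.countable_empty) part1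
    · exact h
  obtain ⟨a, ha⟩ := hne
  by_contra hcon
  push_neg at hcon
  apply part1
  have hsub : {s : ℝ | ¬ LipschitzPtAt φ s} ⊆ {s | r s = r a} ∪ {s | r s = -(r a)} := by
    intro b hb
    have hdep := hcon a b ha hb
    have hra : r a ≠ 0 := by
      intro h
      have := hr1 a
      rw [h, norm_zero] at this
      exact zero_ne_one this
    rw [LinearIndependent.pair_iff' hra] at hdep
    push_neg at hdep
    obtain ⟨c, hc⟩ := hdep
    have habs : |c| = 1 := by
      have := congrArg norm hc
      rw [norm_smul, hr1, hr1, Real.norm_eq_abs, mul_one] at this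
      exact this
    rcases (abs_eq (by norm_num : (0:ℝ) ≤ 1)).1 habs with h | h
    · left
      show r b = r a
      rw [← hc, h, one_smul]
    · right
      show r b = -(r a)
      rw [← hc, h, neg_one_smul]
  exact ((countable_levelset hrd hdr (r a)).union
    (countable_levelset hrd hdr (-(r a)))).mono hsub
end
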